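/- Let m_1 and m_2 be integers with 1 ≤ m_1 ≤ m_2 and let n be an integer with 2 ≤ n ≤ 2m_2 − 2. Then R(P_n, K_{m_1,m_2}) > (n−1) + m_1; in other words, P_n is not K_{m_1,m_2}-good. -/

import Mathlib

open SimpleGraph

/-- Graph `A` contains a copy of graph `B`, i.e. a subgraph isomorphic to `B`. -/
def ContainsCopy {α β : Type*} (A : SimpleGraph α) (B : SimpleGraph β) : Prop :=
  ∃ f : β ↪ α, ∀ x y : β, B.Adj x y → A.Adj (f x) (f y)

/-- The Ramsey number `R(G, H)`: the smallest `N` such that every red-blue coloring of the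
edges of `K_N` (identified with its graph of red edges) contains a red copy of `G` or a blue
copy of `H`. -/
noncomputable def ramsey {α β : Type*} (G : SimpleGraph α) (H : SimpleGraph β) : ℕ :=
  sInf {N : ℕ | ∀ red : SimpleGraph (Fin N), ContainsCopy red G ∨ ContainsCopy redᶜ H}

/- ### Auxiliary lemmas -/

lemma aux_getVert_mem_support {V : Type*} {G : SimpleGraph V} :
    ∀ {u v : V} (p : G.Walk u v) (i : ℕ), p.getVert i ∈ p.support := by
  intro u v p
  induction p with
  | nil => intro i; simp [Walk.getVert]
  | cons h q ih =>
    intro i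
    cases i with
    | zero => simp
    | succ i =>
      rw [Walk.support_cons]
      exact List.mem_cons_of_mem _ (ih i)

lemma aux_path_getVert_inj {V : Type*} {G : SimpleGraph V} :
    ∀ {u v : V} (p : G.Walk u v), p.IsPath → ∀ i j, i ≤ p.length → j ≤ p.length →
      p.getVert i = p.getVert j → i = j := by
  intro u v p
  induction p with
  | nil => intro _ i j hi hj _; simp at hi hj; omega
  | cons h q ih =>
    intro hp i j hi hj heq
    rw [Walk.cons_isPath_iff] at hp
    rw [Walk.length_cons] at hi hj
    cases i with
    | zero =>
      cases j with
      | zero => rfl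
      | succ j =>
        exfalso
        apply hp.2
        have : (Walk.cons h q).getVert 0 = _ := Walk.getVert_zero _
        rw [this] at heq
        rw [heq]
        exact aux_getVert_mem_support q j
    | succ i =>
      cases j with
      | zero =>
        exfalso
        apply hp.2
        have : (Walk.cons h q).getVert 0 = _ := Walk.getVert_zero _
        rw [this] at heq
        rw [← heq]
        exact aux_getVert_mem_support q i
      | succ j =>
        have : i = j := ih hp.1 i j (by omega) (by omega) heq
        omega

/-- Counting helper: if `g` maps `α` injectively into `Fin N` with values in
`[0, a) ∪ [nn, N)`, then `card α ≤ a + (N - nn)`. -/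
lemma aux_count {α : Type*} [Fintype α] {N : ℕ} (g : α → Fin N)
    (hg : Function.Injective g) (a nn : ℕ) (han : a ≤ nn)
    (h : ∀ x, (g x : ℕ) < a ∨ nn ≤ (g x : ℕ)) :
    Fintype.card α ≤ a + (N - nn) := by
  classical
  have := Finset.card_le_card_of_injOn
    (f := fun x : α => if (g x : ℕ) < a then (g x : ℕ) else (g x : ℕ) - nn + a)
    (s := Finset.univ) (t := Finset.range (a + (N - nn)))
    (by
      intro x _
      have h1 := h x
      have h2 : (g x : ℕ) < N := (g x).isLt
      by_cases hc : (g x : ℕ) < a <;> simp only [hc, if_true, if_false,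
        Finset.mem_range, Finset.coe_range, Set.mem_Iio] <;> omega)
    (by
      intro x _ y _ hxy
      have h1 := h x
      have h2 := h y
      have h3 : (g x : ℕ) = (g y : ℕ) := by
        by_cases hc1 : (g x : ℕ) < a <;> by_cases hc2 : (g y : ℕ) < a <;>
          simp only [hc1, hc2, if_true, if_false] at hxy <;> omega
      exact hg (Fin.val_injective h3))
  simpa using this

/-- Every `P_n`-free graph on at least `(n-1)*s` vertices has an independent set
of size at least `s`. -/
lemma aux_indep (n : ℕ) (hn : 2 ≤ n) :
    ∀ (s : ℕ) (V : Type) [Fintype V] [DecidableEq V] (G : SimpleGraph V),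
      ¬ ContainsCopy G (pathGraph n) → (n - 1) * s ≤ Fintype.card V →
      ∃ t : Finset V, s ≤ t.card ∧ ∀ x ∈ t, ∀ y ∈ t, x ≠ y → ¬ G.Adj x y := by
  intro s
  induction s with
  | zero =>
    intro V _ _ G _ _
    exact ⟨∅, by simp, by simp⟩
  | succ s ih =>
    intro V _ _ G hG hcard
    classical
    -- V is nonempty
    have hVpos : 0 < Fintype.card V := by
      have : n - 1 ≤ (n - 1) * (s + 1) := Nat.le_mul_of_pos_right _ (by omega)
      omega
    obtain ⟨v₀⟩ := Fintype.card_pos_iff.mp hVpos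
    -- the set of lengths of paths
    set L : Set ℕ := {l | ∃ (u v : V) (p : G.Walk u v), p.IsPath ∧ p.length = l} with hL
    have hne : L.Nonempty := ⟨0, v₀, v₀, Walk.nil, by simp, rfl⟩
    have hbdd : BddAbove L := by
      refine ⟨Fintype.card V, ?_⟩
      rintro l ⟨u, v, p, hp, rfl⟩
      exact hp.length_lt.le
    obtain ⟨u, v, p, hp, hpl⟩ := Nat.sSup_mem hne hbdd
    -- maximality of the path
    have hmax : ∀ (u' v' : V) (q : G.Walk u' v'), q.IsPath → q.length ≤ p.length := by
      intro u' v' q hq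
      rw [hpl]
      exact le_csSup hbdd ⟨u', v', q, hq, rfl⟩
    -- the path has at most n - 1 vertices
    have hlen : p.length + 1 ≤ n - 1 := by
      by_contra hcon
      have hlen' : n - 1 ≤ p.length := by omega
      apply hG
      refine ⟨⟨fun i => p.getVert i.val, ?_⟩, ?_⟩
      · intro i j hij
        have := aux_path_getVert_inj p hp i.val j.val (by omega) (by omega) hij
        exact Fin.ext this
      · intro x y hxy
        rw [pathGraph_adj] at hxy
        show G.Adj (p.getVert x.val) (p.getVert y.val)
        rcases hxy with hxy | hxy
        · have hx : x.val < p.length := by omega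
          have := p.adj_getVert_succ hx
          rwa [hxy] at this
        · have hy : y.val < p.length := by omega
          have := p.adj_getVert_succ hy
          rw [hxy] at this
          exact this.symm
    -- all neighbours of u are on the path
    have hnbr : ∀ w, G.Adj u w → w ∈ p.support := by
      intro w hadj
      by_contra hw
      have hq : (p.cons hadj.symm).IsPath := (Walk.cons_isPath_iff _ _).2 ⟨hp, hw⟩
      have := hmax _ _ _ hq
      rw [Walk.length_cons] at this
      omega
    -- pass to the complement of the support
    have hsupcard : Fintype.card {x : V // x ∈ p.support} ≤ n - 1 := by
      have h1 : Fintype.card {x : V // x ∈ p.support} = p.support.toFinset.card :=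
        (Fintype.card_congr (Equiv.subtypeEquivRight (fun x =>
          (List.mem_toFinset (a := x) (l := p.support)).symm))).trans
          (Fintype.card_coe p.support.toFinset)
      have h2 : p.support.toFinset.card ≤ p.support.length := p.support.toFinset_card_le
      rw [Walk.length_support] at h2
      omega
    have hcard' : (n - 1) * s ≤ Fintype.card {x : V // x ∉ p.support} := by
      have := Fintype.card_subtype_compl (fun x : V => x ∈ p.support)
      rw [this]
      have : (n - 1) * (s + 1) = (n - 1) * s + (n - 1) := by ring
      omega
    set G' : SimpleGraph {x : V // x ∉ p.support} :=
      G.comap (fun x => x.val) with hG'def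
    have hG' : ¬ ContainsCopy G' (pathGraph n) := by
      rintro ⟨g, hg⟩
      exact hG ⟨g.trans (Function.Embedding.subtype _), fun x y h => hg x y h⟩
    obtain ⟨t', ht'card, ht'⟩ := ih _ G' hG' hcard'
    refine ⟨insert u (t'.map ⟨Subtype.val, Subtype.val_injective⟩), ?_, ?_⟩
    · have hu : u ∉ t'.map ⟨Subtype.val, Subtype.val_injective⟩ := by
        simp only [Finset.mem_map, Function.Embedding.coeFn_mk]
        rintro ⟨⟨x, hx⟩, -, heq⟩
        have hxu : x = u := heq
        exact (hxu ▸ hx) p.start_mem_support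
      rw [Finset.card_insert_of_notMem hu, Finset.card_map]
      omega
    · intro x hx y hy hxy
      rw [Finset.mem_insert] at hx hy
      rcases hx with rfl | hx
      · rcases hy with rfl | hy
        · exact absurd rfl hxy
        · simp only [Finset.mem_map, Function.Embedding.coeFn_mk] at hy
          obtain ⟨⟨y', hy'⟩, _, rfl⟩ := hy
          intro hadj
          exact hy' (hnbr _ hadj)
      · rcases hy with rfl | hy
        · simp only [Finset.mem_map, Function.Embedding.coeFn_mk] at hx
          obtain ⟨⟨x', hx'⟩, _, rfl⟩ := hx
          intro hadj
          exact hx' (hnbr _ hadj.symm)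
        · simp only [Finset.mem_map, Function.Embedding.coeFn_mk] at hx hy
          obtain ⟨⟨x', hx'⟩, hxt, rfl⟩ := hx
          obtain ⟨⟨y', hy'⟩, hyt, rfl⟩ := hy
          exact ht' _ hxt _ hyt (by simpa using hxy)

/-- The lower-bound construction: complete bipartite graph between the first `a`
vertices and the next `n - a` vertices, all remaining vertices isolated. -/
def redG (N a n : ℕ) : SimpleGraph (Fin N) where
  Adj x y := ((x : ℕ) < a ∧ a ≤ (y : ℕ) ∧ (y : ℕ) < n) ∨
    ((y : ℕ) < a ∧ a ≤ (x : ℕ) ∧ (x : ℕ) < n)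
  symm := ⟨by intro x y h; tauto⟩
  loopless := ⟨by intro x h; rcases h with ⟨h1, h2, h3⟩ | ⟨h1, h2, h3⟩ <;> omega⟩

lemma redG_adj (N a n : ℕ) (x y : Fin N) : (redG N a n).Adj x y ↔
    (((x : ℕ) < a ∧ a ≤ (y : ℕ) ∧ (y : ℕ) < n) ∨
      ((y : ℕ) < a ∧ a ≤ (x : ℕ) ∧ (x : ℕ) < n)) := Iff.rfl

/-- For `1 ≤ m₁ ≤ m₂` and `2 ≤ n ≤ 2m₂ - 2`, one has `R(P_n, K_{m₁,m₂}) > (n-1) + m₁`;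
that is, `P_n` is not `K_{m₁,m₂}`-good. -/
theorem stmt16 (m₁ m₂ n : ℕ) (hm₁ : 1 ≤ m₁) (hm : m₁ ≤ m₂)
    (hn₂ : 2 ≤ n) (hn : n ≤ 2 * m₂ - 2) :
    (n - 1) + m₁ < ramsey (pathGraph n) (completeBipartiteGraph (Fin m₁) (Fin m₂)) := by
  classical
  set S : Set ℕ := {N : ℕ | ∀ red : SimpleGraph (Fin N),
    ContainsCopy red (pathGraph n) ∨
      ContainsCopy redᶜ (completeBipartiteGraph (Fin m₁) (Fin m₂))} with hS
  have hm₂2 : 2 ≤ m₂ := by omega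
  -- Upper bound: S is nonempty.
  have hmemS : (n - 1) * (m₁ + m₂) ∈ S := by
    intro red
    by_cases hc : ContainsCopy red (pathGraph n)
    · exact Or.inl hc
    · right
      obtain ⟨t, htcard, ht⟩ := aux_indep n hn₂ (m₁ + m₂) _ red hc (by simp)
      obtain ⟨t', ht't, ht'card⟩ := Finset.exists_subset_card_eq htcard
      set e := t'.orderIsoOfFin ht'card with he
      refine ⟨⟨fun z => (e (finSumFinEquiv z)).val, ?_⟩, ?_⟩
      · intro z w hzw
        apply finSumFinEquiv.injective
        apply e.injective
        exact Subtype.ext hzw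
      · intro x y hxy
        have hne : finSumFinEquiv x ≠ finSumFinEquiv y := fun h =>
          hxy.ne (finSumFinEquiv.injective h)
        have hvne : (e (finSumFinEquiv x)).val ≠ (e (finSumFinEquiv y)).val := by
          intro h
          exact hne (e.injective (Subtype.ext h))
        rw [compl_adj]
        exact ⟨hvne, ht _ (ht't (e (finSumFinEquiv x)).2) _ (ht't (e (finSumFinEquiv y)).2) hvne⟩
  -- Lower bound: every element of S exceeds (n-1) + m₁.
  have hlb : ∀ N ∈ S, (n - 1) + m₁ < N := by
    intro N hN
    by_contra hcon
    have hNle : N ≤ n - 1 + m₁ := by omega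
    set a : ℕ := n - m₂ with ha
    set red : SimpleGraph (Fin N) := redG N a n with hred
    have hredadj := redG_adj N a n
    rcases hN red with hpath | hblue
    · -- no red path
      obtain ⟨f, hf⟩ := hpath
      have hnN : n ≤ N := by
        have := Fintype.card_le_of_injective f f.injective
        simpa using this
      have hnpos : 0 < n := by omega
      -- the A-side membership alternates along the path
      have step : ∀ (k : ℕ) (hk : k + 1 < n),
          ((f ⟨k, by omega⟩ : Fin N) : ℕ) < a ↔ ¬ ((f ⟨k + 1, hk⟩ : Fin N) : ℕ) < a := by
        intro k hk
        have hadj := hf ⟨k, by omega⟩ ⟨k + 1, hk⟩ (by rw [pathGraph_adj]; left; rfl)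
        rw [hredadj] at hadj
        constructor
        · intro h1
          omega
        · intro h1
          omega
      have alt : ∀ (k : ℕ) (hk : k < n),
          (((f ⟨k, hk⟩ : Fin N)) : ℕ) < a ↔
            (k % 2 = 0 ↔ ((f ⟨0, by omega⟩ : Fin N) : ℕ) < a) := by
        intro k
        induction k with
        | zero => intro hk; simp
        | succ k ihk =>
          intro hk
          have h1 := ihk (by omega)
          have h2 := step k hk
          have h3 : (k + 1) % 2 = 0 ↔ ¬ (k % 2 = 0) := by omega
          tauto
      obtain ⟨r, hr2, hrP⟩ : ∃ r, r < 2 ∧ ∀ (k : ℕ) (hk : k < n), k % 2 = r →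
          ((f ⟨k, hk⟩ : Fin N) : ℕ) < a := by
        by_cases h0 : ((f ⟨0, by omega⟩ : Fin N) : ℕ) < a
        · exact ⟨0, by omega, fun k hk hk2 => (alt k hk).2 (by tauto)⟩
        · refine ⟨1, by omega, fun k hk hk2 => (alt k hk).2 ?_⟩
          constructor
          · intro h; omega
          · intro h; exact absurd h h0
      -- injection of n/2 many vertices into the A side
      have hcount : n / 2 ≤ a + (N - N) := by
        have hinj : Function.Injective
            (fun j : Fin (n / 2) => f ⟨(2 * j.val + r) % n, Nat.mod_lt _ hnpos⟩) := by
          intro i j hij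
          have := f.injective hij
          have h1 : (2 * i.val + r) % n = (2 * j.val + r) % n := by
            exact congrArg Fin.val this
          have hi2 : 2 * i.val + r < n := by have := i.isLt; omega
          have hj2 : 2 * j.val + r < n := by have := j.isLt; omega
          rw [Nat.mod_eq_of_lt hi2, Nat.mod_eq_of_lt hj2] at h1
          exact Fin.ext (by omega)
        have := aux_count _ hinj a N (by omega)
          (fun j => by
            left
            have hj2 : 2 * j.val + r < n := by have := j.isLt; omega
            have hmod : (2 * j.val + r) % n = 2 * j.val + r := Nat.mod_eq_of_lt hj2
            have := hrP ((2 * j.val + r) % n) (Nat.mod_lt _ hnpos) (by omega)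
            exact this)
        simpa using this
      omega
    · -- no blue complete bipartite graph
      obtain ⟨f, hf⟩ := hblue
      set Lf : Fin m₁ → Fin N := fun x => f (Sum.inl x) with hLf
      set Rf : Fin m₂ → Fin N := fun y => f (Sum.inr y) with hRf
      have key : ∀ x y, ¬ ((((Lf x) : ℕ) < a ∧ a ≤ ((Rf y) : ℕ) ∧ ((Rf y) : ℕ) < n) ∨
          (((Rf y) : ℕ) < a ∧ a ≤ ((Lf x) : ℕ) ∧ ((Lf x) : ℕ) < n)) := by
        intro x y
        have h := hf (Sum.inl x) (Sum.inr y) (by simp)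
        rw [compl_adj] at h
        exact fun hc => h.2 ((hredadj _ _).2 hc)
      have hLinj : Function.Injective Lf := fun x y h => by
        have := f.injective h; exact Sum.inl_injective this
      have hm1card : Fintype.card (Fin m₁ ⊕ Fin m₂) = m₁ + m₂ := by simp
      by_cases hXA : ∃ x, ((Lf x) : ℕ) < a
      · obtain ⟨x₀, hx₀⟩ := hXA
        have hY : ∀ y, ((Rf y) : ℕ) < a ∨ n ≤ ((Rf y) : ℕ) := by
          intro y; have h := key x₀ y; omega
        by_cases hXB : ∃ x, a ≤ ((Lf x) : ℕ) ∧ ((Lf x) : ℕ) < n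
        · obtain ⟨x₁, hx₁⟩ := hXB
          have hY2 : ∀ y, n ≤ ((Rf y) : ℕ) := by
            intro y; have h := key x₁ y; have h2 := hY y; omega
          have hinjR : Function.Injective Rf := fun x y h => by
            have := f.injective h; exact Sum.inr_injective this
          have := aux_count Rf hinjR 0 n (by omega) (fun y => Or.inr (hY2 y))
          simp only [Fintype.card_fin] at this
          omega
        · have hX' : ∀ x, ((Lf x) : ℕ) < a ∨ n ≤ ((Lf x) : ℕ) := by
            intro x
            have h := not_exists.1 hXB x
            omega
          have hall : ∀ z : Fin m₁ ⊕ Fin m₂, ((f z : ℕ) < a ∨ n ≤ (f z : ℕ)) := by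
            rintro (x | y)
            · exact hX' x
            · exact hY y
          have := aux_count (fun z => f z) f.injective a n (by omega) hall
          rw [hm1card] at this
          omega
      · have hX' : ∀ x, a ≤ ((Lf x) : ℕ) := by
          intro x; have h := not_exists.1 hXA x; omega
        by_cases hXB : ∃ x, ((Lf x) : ℕ) < n
        · obtain ⟨x₁, hx₁⟩ := hXB
          have hY : ∀ y, a ≤ ((Rf y) : ℕ) := by
            intro y
            have h := key x₁ y
            have h2 := hX' x₁
            omega
          have hall : ∀ z : Fin m₁ ⊕ Fin m₂, ((f z : ℕ) < 0 ∨ a ≤ (f z : ℕ)) := by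
            rintro (x | y)
            · exact Or.inr (hX' x)
            · exact Or.inr (hY y)
          have := aux_count (fun z => f z) f.injective 0 a (by omega) hall
          rw [hm1card] at this
          omega
        · have hX2 : ∀ x, n ≤ ((Lf x) : ℕ) := by
            intro x
            have h := not_exists.1 hXB x
            omega
          have := aux_count Lf hLinj 0 n (by omega) (fun x => Or.inr (hX2 x))
          simp only [Fintype.card_fin] at this
          omega
  have hSne : S.Nonempty := ⟨_, hmemS⟩
  have := hlb _ (Nat.sInf_mem hSne)
  exact this
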